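/- (Theorem 3, performance guarantee of the greedy algorithm.) Let P = {h₁, …, hₙ} ⊆ D be a finite heuristic population with n > k and k ≥ 2. Let H₁ = {h*} where h* minimizes F({h}) over h ∈ P, and let the greedy sets H₁ ⊂ H₂ ⊂ ⋯ ⊂ H_k be built by iteratively adding, at each step j = 1, …, k−1, an element h_{j}' ∈ P \ H_j maximizing the marginal decrease F(H_j) − F(H_j ∪ {h}) over h ∈ P \ H_j, and setting H_{j+1} = H_j ∪ {h_j'}. Let Hᵒ be a subset of P of size k minimizing F among all size-k subsets of P. Then the greedy output H^{ga} = H_k satisfies F(H₁) − F(H^{ga}) ≥ (1 − k/(e·k − e)) · (F(H₁) − F(Hᵒ)), where e is the natural constant. -/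

import Mathlib

open Finset

private lemma ginf_le {D : Type*} (g : D → ℝ) {S : Finset D} {b : D} (hb : b ∈ S) :
    sInf (g '' (S : Set D)) ≤ g b := by
  rw [← Finset.inf'_eq_csInf_image S ⟨b, hb⟩ g]
  exact Finset.inf'_le _ hb

private lemma ginf_mono {D : Type*} (g : D → ℝ) {S T : Finset D} (hS : S.Nonempty)
    (hST : S ⊆ T) : sInf (g '' (T : Set D)) ≤ sInf (g '' (S : Set D)) := by
  rw [← Finset.inf'_eq_csInf_image S hS g, ← Finset.inf'_eq_csInf_image T (hS.mono hST) g]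
  exact Finset.inf'_mono (f := g) hST hS

private lemma ginf_exists {D : Type*} (g : D → ℝ) {S : Finset D} (hS : S.Nonempty) :
    ∃ b ∈ S, sInf (g '' (S : Set D)) = g b := by
  rw [← Finset.inf'_eq_csInf_image S hS g]
  obtain ⟨b, hb, h⟩ := Finset.exists_mem_eq_inf' hS g
  exact ⟨b, hb, h⟩

private lemma ginf_submod {D : Type*} [DecidableEq D] (g : D → ℝ) (A B : Finset D)
    (hA : A.Nonempty) :
    sInf (g '' (A : Set D)) - sInf (g '' ((A ∪ B : Finset D) : Set D)) ≤
      ∑ b ∈ B \ A, (sInf (g '' (A : Set D)) - sInf (g '' ((insert b A : Finset D) : Set D))) := by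
  have hterm : ∀ b ∈ B \ A,
      0 ≤ sInf (g '' (A : Set D)) - sInf (g '' ((insert b A : Finset D) : Set D)) := by
    intro b _
    have := ginf_mono g hA (Finset.subset_insert b A)
    linarith
  obtain ⟨b0, hb0, hval⟩ := ginf_exists g (show (A ∪ B).Nonempty from hA.mono Finset.subset_union_left)
  by_cases hb0A : b0 ∈ A
  · have h1 : sInf (g '' (A : Set D)) ≤ g b0 := ginf_le g hb0A
    have h2 : (0:ℝ) ≤ ∑ b ∈ B \ A,
        (sInf (g '' (A : Set D)) - sInf (g '' ((insert b A : Finset D) : Set D))) :=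
      Finset.sum_nonneg hterm
    linarith
  · have hb0BA : b0 ∈ B \ A := by
      rcases Finset.mem_union.1 hb0 with h | h
      · exact absurd h hb0A
      · exact Finset.mem_sdiff.2 ⟨h, hb0A⟩
    have h2 : sInf (g '' ((insert b0 A : Finset D) : Set D)) ≤ g b0 :=
      ginf_le g (Finset.mem_insert_self b0 A)
    have h3 := Finset.single_le_sum hterm hb0BA
    linarith

/-- Theorem 3 (performance guarantee of the greedy algorithm): let `P ⊆ D` be a
finite heuristic population with `|P| > k ≥ 2`, let `H₁ = {h*}` with `h*`
minimizing `F({h})` over `h ∈ P`, and let the greedy sets be built by iteratively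
adding an element of `P \ H_j` maximizing the marginal decrease of `F`. If `Hᵒ`
is a size-`k` subset of `P` minimizing `F` among all size-`k` subsets of `P`,
then the greedy output `H^{ga} = H_k` satisfies
`F(H₁) - F(H^{ga}) ≥ (1 - k/(e·k - e)) · (F(H₁) - F(Hᵒ))`. -/
theorem greedy_performance_guarantee {D ι : Type*} [DecidableEq D]
    (I : Finset ι) (hI : I.Nonempty) (f : ι → D → ℝ)
    (P : Finset D) (k : ℕ) (hk : 2 ≤ k) (hkn : k < P.card)
    (F : Finset D → ℝ)
    (hF : ∀ S : Finset D,
      F S = (1 / (I.card : ℝ)) * ∑ i ∈ I, sInf (f i '' (S : Set D)))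
    (hstar : D) (hstarP : hstar ∈ P)
    (hstarMin : ∀ h ∈ P, F {hstar} ≤ F {h})
    (H : ℕ → Finset D) (hH1 : H 1 = {hstar})
    (hgreedy : ∀ j, 1 ≤ j → j < k → ∃ h' ∈ P \ H j,
      (∀ h ∈ P \ H j,
        F (H j) - F (insert h (H j)) ≤ F (H j) - F (insert h' (H j))) ∧
      H (j + 1) = insert h' (H j))
    (Ho : Finset D) (hHoP : Ho ⊆ P) (hHocard : Ho.card = k)
    (hHoMin : ∀ S ⊆ P, S.card = k → F Ho ≤ F S) :
    F (H 1) - F (H k) ≥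
      (1 - (k : ℝ) / (Real.exp 1 * k - Real.exp 1)) * (F (H 1) - F Ho) := by
  have hc : (0:ℝ) ≤ 1 / (I.card : ℝ) := by positivity
  -- monotonicity of F
  have hFmono : ∀ A B : Finset D, A.Nonempty → A ⊆ B → F B ≤ F A := by
    intro A B hA hAB
    rw [hF A, hF B]
    exact mul_le_mul_of_nonneg_left
      (Finset.sum_le_sum fun i _ => ginf_mono (f i) hA hAB) hc
  -- submodularity-type inequality for F
  have hFsub : ∀ A B : Finset D, A.Nonempty →
      F A - F (A ∪ B) ≤ ∑ b ∈ B \ A, (F A - F (insert b A)) := by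
    intro A B hA
    have hR : ∑ b ∈ B \ A, (F A - F (insert b A))
        = (1 / (I.card : ℝ)) * ∑ i ∈ I, ∑ b ∈ B \ A,
            (sInf (f i '' (A : Set D)) - sInf (f i '' ((insert b A : Finset D) : Set D))) := by
      rw [Finset.sum_comm, Finset.mul_sum]
      refine Finset.sum_congr rfl fun b _ => ?_
      rw [hF A, hF (insert b A), ← mul_sub, ← Finset.sum_sub_distrib]
    rw [hR, hF A, hF (A ∪ B), ← mul_sub, ← Finset.sum_sub_distrib]
    exact mul_le_mul_of_nonneg_left
      (Finset.sum_le_sum fun i _ => ginf_submod (f i) A B hA) hc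
  have hk0 : (0:ℝ) < (k : ℝ) := by positivity
  have hkr : (2:ℝ) ≤ (k : ℝ) := by exact_mod_cast hk
  have ht0 : (0:ℝ) ≤ 1 - 1/(k:ℝ) := by
    rw [sub_nonneg]
    rw [div_le_one hk0]
    linarith
  have hHo_ne : Ho.Nonempty := Finset.card_pos.1 (by omega)
  -- main greedy induction
  have key : ∀ j, 1 ≤ j → j ≤ k → (H j).Nonempty ∧ H j ⊆ P ∧
      F (H j) - F Ho ≤ (1 - 1/(k:ℝ))^(j-1) * (F (H 1) - F Ho) := by
    intro j hj
    induction j, hj using Nat.le_induction with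
    | base =>
      intro _
      refine ⟨?_, ?_, ?_⟩
      · rw [hH1]; exact Finset.singleton_nonempty _
      · rw [hH1]; exact Finset.singleton_subset_iff.2 hstarP
      · simp
    | succ j hj ih =>
      intro hjk
      have hjk' : j < k := by omega
      obtain ⟨hne, hsub, hgap⟩ := ih (le_of_lt hjk')
      obtain ⟨h', hh'P, hmax, hH'⟩ := hgreedy j hj hjk'
      refine ⟨?_, ?_, ?_⟩
      · rw [hH']; exact Finset.insert_nonempty _ _
      · rw [hH']; exact Finset.insert_subset (Finset.mem_sdiff.1 hh'P).1 hsub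
      · have hδ0 : 0 ≤ F (H j) - F (H (j+1)) := by
          have := hFmono (H j) (H (j+1)) hne (by rw [hH']; exact Finset.subset_insert _ _)
          linarith
        have hgapk : F (H j) - F Ho ≤ (k : ℝ) * (F (H j) - F (H (j+1))) := by
          have h1 : F (H j ∪ Ho) ≤ F Ho := hFmono Ho (H j ∪ Ho) hHo_ne Finset.subset_union_right
          have h2 := hFsub (H j) Ho hne
          have h3 : ∑ b ∈ Ho \ H j, (F (H j) - F (insert b (H j)))
              ≤ ∑ _b ∈ Ho \ H j, (F (H j) - F (H (j+1))) := by
            refine Finset.sum_le_sum fun b hb => ?_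
            have hbP : b ∈ P \ H j := Finset.mem_sdiff.2
              ⟨hHoP (Finset.mem_sdiff.1 hb).1, (Finset.mem_sdiff.1 hb).2⟩
            have := hmax b hbP
            rw [hH']
            exact this
          have h4 : ∑ _b ∈ Ho \ H j, (F (H j) - F (H (j+1)))
              = ((Ho \ H j).card : ℝ) * (F (H j) - F (H (j+1))) := by
            rw [Finset.sum_const, nsmul_eq_mul]
          have h5 : ((Ho \ H j).card : ℝ) ≤ (k : ℝ) := by
            have := Finset.card_le_card (Finset.sdiff_subset (s := Ho) (t := H j))
            rw [hHocard] at this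
            exact_mod_cast this
          have h6 : ((Ho \ H j).card : ℝ) * (F (H j) - F (H (j+1)))
              ≤ (k : ℝ) * (F (H j) - F (H (j+1))) :=
            mul_le_mul_of_nonneg_right h5 hδ0
          linarith
        have hstep : F (H (j+1)) - F Ho ≤ (1 - 1/(k:ℝ)) * (F (H j) - F Ho) := by
          have h6 : (F (H j) - F Ho)/(k:ℝ) ≤ F (H j) - F (H (j+1)) :=
            (div_le_iff₀ hk0).2 (by linarith)
          have h7 : (1 - 1/(k:ℝ)) * (F (H j) - F Ho)
              = (F (H j) - F Ho) - (F (H j) - F Ho)/(k:ℝ) := by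
            field_simp
          linarith
        have h8 : (1 - 1/(k:ℝ)) * (F (H j) - F Ho)
            ≤ (1 - 1/(k:ℝ)) * ((1 - 1/(k:ℝ))^(j-1) * (F (H 1) - F Ho)) :=
          mul_le_mul_of_nonneg_left hgap ht0
        have h9 : (1 - 1/(k:ℝ)) * ((1 - 1/(k:ℝ))^(j-1) * (F (H 1) - F Ho))
            = (1 - 1/(k:ℝ))^(j+1-1) * (F (H 1) - F Ho) := by
          have hj1 : j - 1 + 1 = j := Nat.succ_pred_eq_of_pos hj
          rw [← mul_assoc, ← pow_succ', hj1]
          norm_num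
        linarith [hstep, h8, h9.le, h9.ge]
  -- nonnegativity of the initial gap
  have hgap1 : 0 ≤ F (H 1) - F Ho := by
    obtain ⟨S, hS1, hSP, hScard⟩ := Finset.exists_subsuperset_card_eq
      (Finset.singleton_subset_iff.2 hstarP)
      (by simp; omega : ({hstar} : Finset D).card ≤ k) (le_of_lt hkn)
    have hm := hHoMin S hSP hScard
    have hm2 := hFmono {hstar} S (Finset.singleton_nonempty _) hS1
    rw [hH1]
    linarith
  -- analytic bound : (1 - 1/k)^(k-1) ≤ k / (e k - e)
  have ht : (1 - 1/(k:ℝ)) ≤ Real.exp (-(1/(k:ℝ))) := by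
    have := Real.add_one_le_exp (-(1/(k:ℝ)))
    linarith
  have hE0 : (0:ℝ) < Real.exp (1/(k:ℝ)) := Real.exp_pos _
  have he0 : (0:ℝ) < Real.exp 1 := Real.exp_pos _
  have hden : (0:ℝ) < Real.exp 1 * (k:ℝ) - Real.exp 1 := by nlinarith
  have hC : (1 - 1/(k:ℝ))^(k-1) ≤ (k:ℝ) / (Real.exp 1 * (k:ℝ) - Real.exp 1) := by
    have hpow : (1 - 1/(k:ℝ))^(k-1) ≤ Real.exp (-(1/(k:ℝ)))^(k-1) :=
      pow_le_pow_left₀ ht0 ht _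
    have heq : Real.exp (-(1/(k:ℝ)))^(k-1) = Real.exp (1/(k:ℝ) - 1) := by
      rw [← Real.exp_nat_mul]
      congr 1
      have hcast : ((k-1 : ℕ) : ℝ) = (k:ℝ) - 1 := by
        push_cast [Nat.cast_sub (by omega : 1 ≤ k)]
        ring
      rw [hcast]
      field_simp
      ring
    have hfinal : Real.exp (1/(k:ℝ) - 1) ≤ (k:ℝ) / (Real.exp 1 * (k:ℝ) - Real.exp 1) := by
      have hEe : Real.exp (1/(k:ℝ) - 1) = Real.exp (1/(k:ℝ)) / Real.exp 1 := Real.exp_sub _ _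
      have h2 : Real.exp (-(1/(k:ℝ))) = (Real.exp (1/(k:ℝ)))⁻¹ := Real.exp_neg _
      rw [h2] at ht
      have h3 : (1 - 1/(k:ℝ)) * Real.exp (1/(k:ℝ))
          ≤ (Real.exp (1/(k:ℝ)))⁻¹ * Real.exp (1/(k:ℝ)) :=
        mul_le_mul_of_nonneg_right ht hE0.le
      rw [inv_mul_cancel₀ (ne_of_gt hE0)] at h3
      have h4 := mul_le_mul_of_nonneg_right h3 hk0.le
      have hdiv : (1 - 1/(k:ℝ)) * Real.exp (1/(k:ℝ)) * (k:ℝ)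
          = ((k:ℝ) - 1) * Real.exp (1/(k:ℝ)) := by
        field_simp
      rw [hdiv] at h4
      rw [hEe, div_le_div_iff₀ he0 hden]
      nlinarith [h4, he0, hE0]
    calc (1 - 1/(k:ℝ))^(k-1) ≤ Real.exp (-(1/(k:ℝ)))^(k-1) := hpow
      _ = Real.exp (1/(k:ℝ) - 1) := heq
      _ ≤ (k:ℝ) / (Real.exp 1 * (k:ℝ) - Real.exp 1) := hfinal
  -- conclusion
  obtain ⟨-, -, hgapkk⟩ := key k (by omega) le_rfl
  have hCmul : (1 - 1/(k:ℝ))^(k-1) * (F (H 1) - F Ho)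
      ≤ ((k:ℝ) / (Real.exp 1 * (k:ℝ) - Real.exp 1)) * (F (H 1) - F Ho) :=
    mul_le_mul_of_nonneg_right hC hgap1
  have hring : (1 - (k:ℝ)/(Real.exp 1 * (k:ℝ) - Real.exp 1)) * (F (H 1) - F Ho)
      = (F (H 1) - F Ho) - ((k:ℝ)/(Real.exp 1 * (k:ℝ) - Real.exp 1)) * (F (H 1) - F Ho) := by
    ring
  linarith
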